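/- For each y ≥ R, the equation u = u(λ, y) (where u(λ,y) is the normalized first vertical moment of the exponential measure e^{-λ·} on D∖B((x̂,y),R)) has a unique solution λ = λ(u, y) > 0 for every u > 0, since λ ↦ u(λ, y) is a continuous strictly decreasing bijection from (0,∞) onto (0,∞). -/

import Mathlib

set_option maxHeartbeats 1000000


open MeasureTheory Real Set

/-- The region `D ∖ B((x̂,y),R)` where `D = D_b × (0,∞)`. -/
def gasRegion {E : Type*} [NormedAddCommGroup E]
    (Db : Set E) (xh : E) (R y : ℝ) : Set (E × ℝ) :=
  {p | p.1 ∈ Db ∧ 0 < p.2 ∧ R ^ 2 < ‖p.1 - xh‖ ^ 2 + (p.2 - y) ^ 2}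

/-- `h_n(λ, y) = ∫_{D∖B((x̂,y),R)} λ r^n e^{-λ r} dx dr`. -/
noncomputable def gasMoment (d : ℕ) (Db : Set (EuclideanSpace ℝ (Fin (d - 1))))
    (xh : EuclideanSpace ℝ (Fin (d - 1))) (R y : ℝ) (n : ℕ) (l : ℝ) : ℝ :=
  ∫ p in gasRegion Db xh R y, l * p.2 ^ n * exp (-l * p.2)


open Filter Topology

lemma integrableOn_pow_exp {l : ℝ} (hl : 0 < l) (n : ℕ) :
    IntegrableOn (fun r : ℝ => r ^ n * exp (-l * r)) (Ioi 0) volume := by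
  have h := integrableOn_rpow_mul_exp_neg_mul_rpow (p := 1) (s := n) (b := l)
    (by exact_mod_cast neg_one_lt_zero.trans_le (Nat.cast_nonneg n)) one_pos hl
  refine h.congr_fun (fun x hx => ?_) measurableSet_Ioi
  simp only [Real.rpow_natCast, Real.rpow_one]

lemma integral_exp_Ioi {l : ℝ} (hl : 0 < l) (c : ℝ) :
    ∫ r in Ioi c, exp (-(l * r)) = exp (-(l * c)) / l := by
  have hderiv : ∀ x ∈ Ici c, HasDerivAt (fun r => -exp (-(l * r)) / l) (exp (-(l * x))) x := by
    intro x _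
    have h1 : HasDerivAt (fun r : ℝ => -(l * r)) (-l) x := by
      exact ((hasDerivAt_id x).const_mul l).neg.congr_deriv (by simp)
    have h2 := (h1.exp).neg.div_const l
    exact h2.congr_deriv (by rw [mul_neg, neg_neg, mul_div_cancel_right₀ _ hl.ne'])
  have hint : IntegrableOn (fun x => exp (-(l * x))) (Ioi c) volume := by
    simpa [neg_mul] using exp_neg_integrableOn_Ioi c hl
  have htend : Tendsto (fun r => -exp (-(l * r)) / l) atTop (nhds 0) := by
    have h0 : Tendsto (fun r : ℝ => -(l * r)) atTop atBot := by
      rw [tendsto_neg_atBot_iff]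
      exact (tendsto_const_mul_atTop_of_pos hl).mpr tendsto_id
    have := (Real.tendsto_exp_atBot.comp h0).neg.div_const l
    simpa using this
  have := integral_Ioi_of_hasDerivAt_of_tendsto' hderiv hint htend
  rw [this]
  ring

lemma mul_exp_le_one {t : ℝ} (ht : 0 ≤ t) : t * exp (-(t / 2)) ≤ 1 := by
  have h : t / 4 + 1 ≤ exp (t / 4) := by linarith [Real.add_one_le_exp (t / 4)]
  have h2 : exp (t / 2) = exp (t / 4) * exp (t / 4) := by rw [← Real.exp_add]; ring_nf
  have h4 : (t/4+1) * (t/4+1) ≤ exp (t/4) * exp (t/4) :=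
    mul_le_mul h h (by linarith) (exp_pos _).le
  have key : t ≤ exp (t / 2) := by nlinarith [sq_nonneg (t - 4)]
  calc t * exp (-(t/2)) ≤ exp (t/2) * exp (-(t/2)) :=
        mul_le_mul_of_nonneg_right key (exp_pos _).le
    _ = 1 := by rw [← Real.exp_add]; simp

lemma integral_id_exp_Ioi_le {l c : ℝ} (hl : 0 < l) (hc : 0 ≤ c) :
    (∫ r in Ioi c, r * exp (-(l * r))) ≤ 2 / l ^ 2 * exp (-(l * c / 2)) := by
  have hint1 : IntegrableOn (fun r : ℝ => r * exp (-(l * r))) (Ioi c) volume := by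
    have := (integrableOn_pow_exp hl 1).mono_set (Ioi_subset_Ioi hc)
    simpa [neg_mul] using this
  have hint2 : IntegrableOn (fun r : ℝ => 1 / l * exp (-(l / 2 * r))) (Ioi c) volume := by
    have := (exp_neg_integrableOn_Ioi c (show (0:ℝ) < l / 2 by positivity)).const_mul (1 / l)
    simpa [neg_mul, IntegrableOn] using this
  have hmono : (∫ r in Ioi c, r * exp (-(l * r))) ≤ ∫ r in Ioi c, 1 / l * exp (-(l / 2 * r)) := by
    refine setIntegral_mono_on hint1 hint2 measurableSet_Ioi (fun x hx => ?_)
    have hx0 : 0 ≤ x := hc.trans (le_of_lt hx)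
    have key : l * x * exp (-(l * x / 2)) ≤ 1 := by
      have := mul_exp_le_one (t := l * x) (by positivity)
      rw [mul_div_assoc] at this
      simpa [mul_div_assoc] using this
    have hsplit : exp (-(l * x)) = exp (-(l * x / 2)) * exp (-(l / 2 * x)) := by
      rw [← Real.exp_add]; congr 1; ring
    calc x * exp (-(l * x)) = 1 / l * (l * x * exp (-(l * x / 2))) * exp (-(l / 2 * x)) := by
          rw [hsplit]; field_simp
      _ ≤ 1 / l * 1 * exp (-(l / 2 * x)) := by
          refine mul_le_mul_of_nonneg_right ?_ (exp_pos _).le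
          refine mul_le_mul_of_nonneg_left key (by positivity)
      _ = 1 / l * exp (-(l / 2 * x)) := by ring
  calc (∫ r in Ioi c, r * exp (-(l * r))) ≤ ∫ r in Ioi c, 1 / l * exp (-(l / 2 * r)) := hmono
    _ = 1 / l * (exp (-(l / 2 * c)) / (l / 2)) := by
        rw [integral_const_mul, integral_exp_Ioi (show (0:ℝ) < l / 2 by positivity)]
    _ = 2 / l ^ 2 * exp (-(l * c / 2)) := by
        rw [show -(l / 2 * c) = -(l * c / 2) by ring]; field_simp

lemma phi_nonneg {a b r s : ℝ} (hab : a ≤ b) :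
    0 ≤ (r - s) * (exp (-(a * r + b * s)) - exp (-(b * r + a * s))) := by
  rcases le_total s r with h | h
  · refine mul_nonneg (by linarith) (sub_nonneg.mpr (exp_le_exp.mpr ?_))
    nlinarith
  · have h1 : exp (-(a * r + b * s)) ≤ exp (-(b * r + a * s)) :=
      exp_le_exp.mpr (by nlinarith)
    nlinarith [mul_nonneg (sub_nonneg.mpr h) (sub_nonneg.mpr h1)]

section Aux

variable {d : ℕ} {Db : Set (EuclideanSpace ℝ (Fin (d - 1)))}
  {xh : EuclideanSpace ℝ (Fin (d - 1))} {R y : ℝ}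

lemma measurableSet_gasRegion (hDb : MeasurableSet Db) :
    MeasurableSet (gasRegion Db xh R y) := by
  have h1 : MeasurableSet {p : EuclideanSpace ℝ (Fin (d-1)) × ℝ | p.1 ∈ Db} :=
    hDb.preimage measurable_fst
  have h2 : MeasurableSet {p : EuclideanSpace ℝ (Fin (d-1)) × ℝ | 0 < p.2} :=
    measurableSet_lt measurable_const measurable_snd
  have hc : Continuous fun p : EuclideanSpace ℝ (Fin (d-1)) × ℝ =>
      ‖p.1 - xh‖ ^ 2 + (p.2 - y) ^ 2 :=
    (((continuous_fst.sub continuous_const).norm.pow 2).add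
      ((continuous_snd.sub continuous_const).pow 2))
  have h3 : MeasurableSet {p : EuclideanSpace ℝ (Fin (d-1)) × ℝ |
      R ^ 2 < ‖p.1 - xh‖ ^ 2 + (p.2 - y) ^ 2} :=
    measurableSet_lt measurable_const hc.measurable
  exact (h1.inter (h2.inter h3))

lemma gasRegion_subset : gasRegion Db xh R y ⊆ Db ×ˢ Ioi (0:ℝ) := by
  rintro ⟨x, r⟩ ⟨h1, h2, _⟩; exact ⟨h1, h2⟩

lemma slab_subset_gasRegion (hR : 0 < R) (hy : R ≤ y) :
    Db ×ˢ Ioi (y + R) ⊆ gasRegion Db xh R y := by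
  rintro ⟨x, r⟩ ⟨h1, h2⟩
  refine ⟨h1, by simp at h2 ⊢; nlinarith [h2], ?_⟩
  have h2' : y + R < r := h2
  nlinarith [sq_nonneg (‖x - xh‖)]

lemma integrableOn_moment (hDb : MeasurableSet Db) (hDbb : Bornology.IsBounded Db)
    {l : ℝ} (hl : 0 < l) (n : ℕ) :
    IntegrableOn (fun p : EuclideanSpace ℝ (Fin (d-1)) × ℝ => p.2 ^ n * exp (-l * p.2))
      (gasRegion Db xh R y) volume := by
  have hDbfin : volume Db < ⊤ := hDbb.measure_lt_top
  haveI : IsFiniteMeasure (volume.restrict Db) :=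
    ⟨by rwa [Measure.restrict_apply_univ]⟩
  have h2 := (integrable_const (1:ℝ) (μ := volume.restrict Db)).mul_prod
    (integrableOn_pow_exp hl n)
  rw [Measure.prod_restrict, ← Measure.volume_eq_prod] at h2
  simp only [one_mul] at h2
  exact h2.mono_measure (Measure.restrict_mono gasRegion_subset le_rfl)


lemma region_box_measure {A : Set (EuclideanSpace ℝ (Fin (d-1)))} (hA : MeasurableSet A)
    {c c' : ℝ} (hsub : A ×ˢ Ioc c c' ⊆ gasRegion Db xh R y) :
    (volume.restrict (gasRegion Db xh R y)) (A ×ˢ Ioc c c')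
      = volume A * ENNReal.ofReal (c' - c) := by
  rw [Measure.restrict_apply (hA.prod measurableSet_Ioc), inter_eq_left.mpr hsub,
    Measure.volume_eq_prod, Measure.prod_prod, Real.volume_Ioc]

lemma box_le_moment (hDb : MeasurableSet Db) (hDbb : Bornology.IsBounded Db)
    {l : ℝ} (hl : 0 < l) (n : ℕ) {A : Set (EuclideanSpace ℝ (Fin (d-1)))}
    (hA : MeasurableSet A) (hAfin : volume A ≠ ⊤) {c c' m : ℝ} (hcc : c ≤ c') (hm : 0 ≤ m)
    (hsub : A ×ˢ Ioc c c' ⊆ gasRegion Db xh R y)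
    (hbd : ∀ r ∈ Ioc c c', m ≤ r ^ n * exp (-l * r)) :
    m * ((volume A).toReal * (c' - c))
      ≤ ∫ p in gasRegion Db xh R y, p.2 ^ n * exp (-l * p.2) := by
  have hSm : MeasurableSet (gasRegion Db xh R y) := measurableSet_gasRegion hDb
  have hint := integrableOn_moment hDb hDbb hl n (xh := xh) (R := R) (y := y)
  have hbox := region_box_measure hA hsub
  have hfin : (volume.restrict (gasRegion Db xh R y)) (A ×ˢ Ioc c c') ≠ ⊤ := by
    rw [hbox]; exact ENNReal.mul_ne_top hAfin ENNReal.ofReal_ne_top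
  have h1 : m * ((volume.restrict (gasRegion Db xh R y)) (A ×ˢ Ioc c c')).toReal
      ≤ ∫ p in A ×ˢ Ioc c c', p.2 ^ n * exp (-l * p.2)
          ∂(volume.restrict (gasRegion Db xh R y)) := by
    refine setIntegral_ge_of_const_le_real (hA.prod measurableSet_Ioc) hfin
      (fun x hx => hbd x.2 hx.2) hint.integrableOn
  have h2 : (∫ p in A ×ˢ Ioc c c', p.2 ^ n * exp (-l * p.2)
        ∂(volume.restrict (gasRegion Db xh R y)))
      ≤ ∫ p, p.2 ^ n * exp (-l * p.2) ∂(volume.restrict (gasRegion Db xh R y)) := by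
    refine setIntegral_le_integral hint ?_
    filter_upwards [ae_restrict_mem hSm] with p hp
    have h0 : (0:ℝ) < p.2 := hp.2.1
    positivity
  calc m * ((volume A).toReal * (c' - c))
      = m * ((volume.restrict (gasRegion Db xh R y)) (A ×ˢ Ioc c c')).toReal := by
        rw [hbox, ENNReal.toReal_mul, ENNReal.toReal_ofReal (by linarith)]
    _ ≤ _ := h1.trans h2

lemma moment_pos (hDb : MeasurableSet Db) (hDbb : Bornology.IsBounded Db)
    (hDbpos : 0 < volume Db) (hR : 0 < R) (hy : R ≤ y)
    {l : ℝ} (hl : 0 < l) (n : ℕ) :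
    0 < ∫ p in gasRegion Db xh R y, p.2 ^ n * exp (-l * p.2) := by
  have hB : (0:ℝ) < y + R := by linarith
  have hsub : Db ×ˢ Ioc (y + R) (y + R + 1) ⊆ gasRegion Db xh R y := by
    refine subset_trans ?_ (slab_subset_gasRegion hR hy)
    exact prod_mono_right (Ioc_subset_Ioi_self)
  have hbd : ∀ r ∈ Ioc (y + R) (y + R + 1),
      (y + R) ^ n * exp (-l * (y + R + 1)) ≤ r ^ n * exp (-l * r) := by
    intro r hr
    have h1 : (y + R) ^ n ≤ r ^ n := pow_le_pow_left₀ hB.le hr.1.le n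
    have h2 : exp (-l * (y + R + 1)) ≤ exp (-l * r) := by
      apply exp_le_exp.mpr; nlinarith [hr.2]
    exact mul_le_mul h1 h2 (exp_pos _).le (pow_nonneg (hB.le.trans hr.1.le) n)
  have hb := box_le_moment hDb hDbb hl n hDb hDbb.measure_lt_top.ne
    (show y + R ≤ y + R + 1 by linarith)
    (mul_nonneg (pow_nonneg hB.le n) (exp_pos _).le) hsub hbd
  have hV : 0 < (volume Db).toReal :=
    ENNReal.toReal_pos hDbpos.ne' hDbb.measure_lt_top.ne
  calc (0:ℝ)
      < ((y+R) ^ n * exp (-l * (y+R+1))) * ((volume Db).toReal * (y + R + 1 - (y+R))) := by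
        have h1 : y + R + 1 - (y+R) = 1 := by ring
        rw [h1]; positivity
    _ ≤ _ := hb

lemma moment_tail_le (hDb : MeasurableSet Db) (hDbb : Bornology.IsBounded Db)
    {l : ℝ} (hl : 0 < l) (n : ℕ) {c : ℝ} (hc : 0 ≤ c) :
    (∫ p in gasRegion Db xh R y ∩ {p | c < p.2}, p.2 ^ n * exp (-l * p.2))
      ≤ (volume Db).toReal * ∫ r in Ioi c, r ^ n * exp (-l * r) := by
  have hDbfin : volume Db < ⊤ := hDbb.measure_lt_top
  haveI : IsFiniteMeasure (volume.restrict Db) :=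
    ⟨by rwa [Measure.restrict_apply_univ]⟩
  have h1d : IntegrableOn (fun r : ℝ => r ^ n * exp (-l * r)) (Ioi c) volume :=
    (integrableOn_pow_exp hl n).mono_set (Ioi_subset_Ioi hc)
  have hprodeq : (volume : Measure (EuclideanSpace ℝ (Fin (d-1)) × ℝ)).restrict (Db ×ˢ Ioi c)
      = (volume.restrict Db).prod (volume.restrict (Ioi c)) := by
    rw [Measure.prod_restrict, ← Measure.volume_eq_prod]
  have hbig : Integrable (fun p : EuclideanSpace ℝ (Fin (d-1)) × ℝ => p.2 ^ n * exp (-l * p.2))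
      ((volume : Measure (EuclideanSpace ℝ (Fin (d-1)) × ℝ)).restrict (Db ×ˢ Ioi c)) := by
    rw [hprodeq]
    have h2 := (integrable_const (1:ℝ) (μ := volume.restrict Db)).mul_prod h1d
    simpa only [one_mul] using h2
  have hmono : (∫ p in gasRegion Db xh R y ∩ {p | c < p.2}, p.2 ^ n * exp (-l * p.2))
      ≤ ∫ p in Db ×ˢ Ioi c, p.2 ^ n * exp (-l * p.2) := by
    refine integral_mono_measure (Measure.restrict_mono ?_ le_rfl) ?_ hbig
    · rintro ⟨x, r⟩ ⟨h1, h2⟩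
      exact ⟨(gasRegion_subset h1).1, h2⟩
    · filter_upwards [ae_restrict_mem (hDb.prod measurableSet_Ioi)] with p hp
      have h0 : (0:ℝ) < p.2 := lt_of_le_of_lt hc hp.2
      positivity
  refine hmono.trans (le_of_eq ?_)
  rw [hprodeq]
  have hpm := integral_prod_mul (μ := volume.restrict Db) (ν := volume.restrict (Ioi c))
      (f := fun _ : EuclideanSpace ℝ (Fin (d-1)) => (1:ℝ)) (g := fun r : ℝ => r ^ n * exp (-l * r))
  simp only [one_mul] at hpm
  rw [hpm]
  simp [integral_const, Measure.restrict_apply_univ, measureReal_def]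

lemma phi_factor (a b r s : ℝ) : (r - s) * (exp (-(a*r + b*s)) - exp (-(b*r + a*s)))
    = (s - r) * (exp (-(a*(r+s))) * (exp (-((b-a)*r)) - exp (-((b-a)*s)))) := by
  have h1 : exp (-(a*(r+s))) * exp (-((b-a)*r)) = exp (-(b*r + a*s)) := by
    rw [← Real.exp_add]; congr 1; ring
  have h2 : exp (-(a*(r+s))) * exp (-((b-a)*s)) = exp (-(a*r + b*s)) := by
    rw [← Real.exp_add]; congr 1; ring
  rw [show (s - r) * (exp (-(a*(r+s))) * (exp (-((b-a)*r)) - exp (-((b-a)*s))))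
      = (s-r) * (exp (-(a*(r+s))) * exp (-((b-a)*r)) - exp (-(a*(r+s))) * exp (-((b-a)*s)))
      by ring, h1, h2]
  ring

lemma moments_strict_ineq (hDb : MeasurableSet Db) (hDbb : Bornology.IsBounded Db)
    (hDbpos : 0 < volume Db) (hR : 0 < R) (hy : R ≤ y)
    {a b : ℝ} (ha : 0 < a) (hab : a < b) :
    (∫ p in gasRegion Db xh R y, p.2 * exp (-b * p.2)) *
        (∫ p in gasRegion Db xh R y, exp (-a * p.2))
      < (∫ p in gasRegion Db xh R y, p.2 * exp (-a * p.2)) *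
        (∫ p in gasRegion Db xh R y, exp (-b * p.2)) := by
  have hb0 : 0 < b := ha.trans hab
  set μ := (volume : Measure (EuclideanSpace ℝ (Fin (d-1)) × ℝ)).restrict (gasRegion Db xh R y)
    with hμdef
  set fa : EuclideanSpace ℝ (Fin (d-1)) × ℝ → ℝ := fun p => exp (-a * p.2) with hfa
  set fb : EuclideanSpace ℝ (Fin (d-1)) × ℝ → ℝ := fun p => exp (-b * p.2) with hfb
  set Fa : EuclideanSpace ℝ (Fin (d-1)) × ℝ → ℝ := fun p => p.2 * exp (-a * p.2) with hFa
  set Fb : EuclideanSpace ℝ (Fin (d-1)) × ℝ → ℝ := fun p => p.2 * exp (-b * p.2) with hFb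
  have h0a : Integrable fa μ := by
    have := integrableOn_moment (xh := xh) (R := R) (y := y) hDb hDbb ha 0
    simpa [hfa, IntegrableOn, hμdef] using this
  have h0b : Integrable fb μ := by
    have := integrableOn_moment (xh := xh) (R := R) (y := y) hDb hDbb hb0 0
    simpa [hfb, IntegrableOn, hμdef] using this
  have h1a : Integrable Fa μ := by
    have := integrableOn_moment (xh := xh) (R := R) (y := y) hDb hDbb ha 1
    simpa [hFa, IntegrableOn, hμdef] using this
  have h1b : Integrable Fb μ := by
    have := integrableOn_moment (xh := xh) (R := R) (y := y) hDb hDbb hb0 1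
    simpa [hFb, IntegrableOn, hμdef] using this
  set Φ : (EuclideanSpace ℝ (Fin (d-1)) × ℝ) × (EuclideanSpace ℝ (Fin (d-1)) × ℝ) → ℝ :=
    fun z => (z.1.2 - z.2.2) *
      (exp (-(a * z.1.2 + b * z.2.2)) - exp (-(b * z.1.2 + a * z.2.2))) with hΦ
  have hΦeq : Φ = fun z => (Fa z.1 * fb z.2 - Fb z.1 * fa z.2)
      - (fa z.1 * Fb z.2 - fb z.1 * Fa z.2) := by
    funext z
    simp only [hΦ, hfa, hfb, hFa, hFb]
    rw [show -(a * z.1.2 + b * z.2.2) = -a * z.1.2 + -b * z.2.2 by ring, Real.exp_add,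
      show -(b * z.1.2 + a * z.2.2) = -b * z.1.2 + -a * z.2.2 by ring, Real.exp_add]
    ring
  have e1 := h1a.mul_prod h0b
  have e2 := h1b.mul_prod h0a
  have e3 := h0a.mul_prod h1b
  have e4 := h0b.mul_prod h1a
  have e12 : Integrable (fun z : (EuclideanSpace ℝ (Fin (d-1)) × ℝ) ×
      (EuclideanSpace ℝ (Fin (d-1)) × ℝ) => Fa z.1 * fb z.2 - Fb z.1 * fa z.2) (μ.prod μ) :=
    e1.sub e2
  have e34 : Integrable (fun z : (EuclideanSpace ℝ (Fin (d-1)) × ℝ) ×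
      (EuclideanSpace ℝ (Fin (d-1)) × ℝ) => fa z.1 * Fb z.2 - fb z.1 * Fa z.2) (μ.prod μ) :=
    e3.sub e4
  have hΦint : Integrable Φ (μ.prod μ) := by
    rw [hΦeq]; exact e12.sub e34
  have hval : ∫ z, Φ z ∂(μ.prod μ)
      = 2 * ((∫ p, Fa p ∂μ) * (∫ p, fb p ∂μ) - (∫ p, Fb p ∂μ) * (∫ p, fa p ∂μ)) := by
    rw [hΦeq, integral_sub e12 e34, integral_sub e1 e2, integral_sub e3 e4,
      integral_prod_mul Fa fb, integral_prod_mul Fb fa, integral_prod_mul fa Fb,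
      integral_prod_mul fb Fa]
    ring
  -- positivity of the double integral
  set B : ℝ := y + R with hBdef
  have hB : (0:ℝ) < B := by simp only [hBdef]; linarith
  have hsubP : Db ×ˢ Ioc B (B+1) ⊆ gasRegion Db xh R y :=
    (Set.prod_mono_right Ioc_subset_Ioi_self).trans (slab_subset_gasRegion hR hy)
  have hsubQ : Db ×ˢ Ioc (B+2) (B+3) ⊆ gasRegion Db xh R y := by
    refine (Set.prod_mono_right (fun r hr => ?_)).trans (slab_subset_gasRegion hR hy)
    exact mem_Ioi.mpr (lt_trans (by linarith) hr.1)
  have hmP : μ (Db ×ˢ Ioc B (B+1)) = volume Db * ENNReal.ofReal 1 := by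
    rw [hμdef, region_box_measure hDb hsubP]; norm_num
  have hmQ : μ (Db ×ˢ Ioc (B+2) (B+3)) = volume Db * ENNReal.ofReal 1 := by
    rw [hμdef, region_box_measure hDb hsubQ]; norm_num
  have hVfin : volume Db ≠ ⊤ := hDbb.measure_lt_top.ne
  set V : ℝ := (volume Db).toReal with hVdef
  have hV : 0 < V := ENNReal.toReal_pos hDbpos.ne' hVfin
  have hPQ : (μ.prod μ) ((Db ×ˢ Ioc B (B+1)) ×ˢ (Db ×ˢ Ioc (B+2) (B+3)))
      = volume Db * volume Db := by
    rw [Measure.prod_prod, hmP, hmQ]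
    simp [ENNReal.ofReal_one]
  have hPQfin : (μ.prod μ) ((Db ×ˢ Ioc B (B+1)) ×ˢ (Db ×ˢ Ioc (B+2) (B+3))) ≠ ⊤ := by
    rw [hPQ]; exact ENNReal.mul_ne_top hVfin hVfin
  set t : ℝ := b - a with htdef
  have ht : 0 < t := by simp only [htdef]; linarith
  set c₀ : ℝ := exp (-(a*(2*B+4))) * (exp (-(t*(B+1))) - exp (-(t*(B+2)))) with hc₀
  have hdpos : 0 < exp (-(t*(B+1))) - exp (-(t*(B+2))) := by
    refine sub_pos.mpr (exp_lt_exp.mpr ?_)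
    nlinarith
  have hc₀pos : 0 < c₀ := mul_pos (exp_pos _) hdpos
  have hlow : ∀ z ∈ (Db ×ˢ Ioc B (B+1)) ×ˢ (Db ×ˢ Ioc (B+2) (B+3)), c₀ ≤ Φ z := by
    rintro ⟨p, q⟩ ⟨hp, hq⟩
    obtain ⟨hr1, hr2⟩ := hp.2
    obtain ⟨hs1, hs2⟩ := hq.2
    have hfac : Φ (p, q) = (q.2 - p.2) *
        (exp (-(a*(p.2+q.2))) * (exp (-(t*p.2)) - exp (-(t*q.2)))) := by
      simp only [hΦ, htdef]
      exact phi_factor a b p.2 q.2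
    rw [hfac]
    have h1le : (1:ℝ) ≤ q.2 - p.2 := by linarith
    have einner : c₀ ≤ exp (-(a*(p.2+q.2))) * (exp (-(t*p.2)) - exp (-(t*q.2))) := by
      rw [hc₀]
      refine mul_le_mul (exp_le_exp.mpr (by nlinarith)) ?_ hdpos.le (exp_pos _).le
      refine sub_le_sub (exp_le_exp.mpr (by nlinarith)) (exp_le_exp.mpr (by nlinarith))
    calc c₀ = 1 * c₀ := by ring
      _ ≤ (q.2 - p.2) * (exp (-(a*(p.2+q.2))) * (exp (-(t*p.2)) - exp (-(t*q.2)))) :=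
        mul_le_mul h1le einner hc₀pos.le (by linarith)
  have hmeasPQ : MeasurableSet ((Db ×ˢ Ioc B (B+1)) ×ˢ (Db ×ˢ Ioc (B+2) (B+3))) :=
    ((hDb.prod measurableSet_Ioc).prod (hDb.prod measurableSet_Ioc))
  have hge := setIntegral_ge_of_const_le_real hmeasPQ hPQfin hlow hΦint.integrableOn
  have hle := setIntegral_le_integral
    (s := (Db ×ˢ Ioc B (B+1)) ×ˢ (Db ×ˢ Ioc (B+2) (B+3))) hΦint
    (Eventually.of_forall (fun z => phi_nonneg hab.le))
  have hpos : 0 < ∫ z, Φ z ∂(μ.prod μ) := by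
    have hPQV : ((μ.prod μ) ((Db ×ˢ Ioc B (B+1)) ×ˢ (Db ×ˢ Ioc (B+2) (B+3)))).toReal
        = V * V := by rw [hPQ, ENNReal.toReal_mul]
    calc (0:ℝ) < c₀ * (V * V) := by positivity
      _ = c₀ * ((μ.prod μ) ((Db ×ˢ Ioc B (B+1)) ×ˢ (Db ×ˢ Ioc (B+2) (B+3)))).toReal := by
          rw [hPQV]
      _ ≤ _ := hge.trans hle
  rw [hval] at hpos
  linarith

lemma exists_lower_base (hd : 2 ≤ d) (hDb : MeasurableSet Db)
    (hR : 0 < R) (hy : R ≤ y) (hball : Metric.ball xh R ⊆ Db)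
    (hDbb : Bornology.IsBounded Db) :
    ∃ η W : ℝ, 0 < η ∧ 0 < W ∧ ∀ ε : ℝ, 0 < ε → ε ≤ η → ∀ l : ℝ, 0 < l →
      exp (-l * ε) * (W * ε) ≤ ∫ p in gasRegion Db xh R y, exp (-l * p.2) := by
  have hy0 : 0 < y := lt_of_lt_of_le hR hy
  set i : Fin (d - 1) := ⟨0, by omega⟩ with hi
  set e : EuclideanSpace ℝ (Fin (d - 1)) := EuclideanSpace.single i (1:ℝ) with he
  have hnorme : ‖e‖ = 1 := by rw [he, EuclideanSpace.norm_single, norm_one]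
  set z : EuclideanSpace ℝ (Fin (d - 1)) := xh + (3*R/4) • e with hz
  have hdzx : ‖z - xh‖ = 3*R/4 := by
    rw [hz, add_sub_cancel_left, norm_smul, hnorme, mul_one]
    rw [Real.norm_eq_abs, abs_of_pos (by linarith)]
  set A : Set (EuclideanSpace ℝ (Fin (d - 1))) := Metric.ball z (R/8) with hA
  have hAm : MeasurableSet A := measurableSet_ball
  have hAfin : volume A ≠ ⊤ := (Metric.isBounded_ball).measure_lt_top.ne
  have hApos : 0 < volume A := Metric.measure_ball_pos _ _ (by positivity)
  set W : ℝ := (volume A).toReal with hW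
  have hWpos : 0 < W := ENNReal.toReal_pos hApos.ne' hAfin
  have hsubDb : A ⊆ Db := by
    intro x hx
    refine hball ?_
    have h1 : dist x z < R/8 := Metric.mem_ball.mp hx
    have h2 : dist x xh ≤ dist x z + dist z xh := dist_triangle x z xh
    have h3 : dist z xh = 3*R/4 := by rw [dist_eq_norm, hdzx]
    exact Metric.mem_ball.mpr (by rw [h3] at h2; linarith)
  have hfar : ∀ x ∈ A, R/2 < ‖x - xh‖ := by
    intro x hx
    have h1 : dist x z < R/8 := Metric.mem_ball.mp hx
    have h2 : dist z xh ≤ dist z x + dist x xh := dist_triangle z x xh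
    have h3 : dist z xh = 3*R/4 := by rw [dist_eq_norm, hdzx]
    have h4 : dist z x = dist x z := dist_comm z x
    have h5 : dist x xh = ‖x - xh‖ := dist_eq_norm x xh
    linarith
  set η : ℝ := min y ((R/2)^2/(2*y+1)) with hη
  have hηpos : 0 < η := lt_min hy0 (by positivity)
  refine ⟨η, W, hηpos, hWpos, ?_⟩
  intro ε hε hεη l hl
  have hεy : ε ≤ y := hεη.trans (min_le_left _ _)
  have hε2 : ε * (2*y+1) ≤ (R/2)^2 := by
    have := hεη.trans (min_le_right _ _)
    rw [le_div_iff₀ (by positivity)] at this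
    exact this
  have hsub : A ×ˢ Ioc 0 ε ⊆ gasRegion Db xh R y := by
    rintro ⟨x, r⟩ ⟨hx, hr⟩
    have hr1 : 0 < r := hr.1
    have hr2 : r ≤ ε := hr.2
    refine ⟨hsubDb hx, hr1, ?_⟩
    have hxx : (R/2)^2 < ‖x - xh‖^2 := by
      have := hfar x hx
      nlinarith [norm_nonneg (x - xh)]
    have h2ry : 2*r*y ≤ (R/2)^2 := by nlinarith
    nlinarith [sq_nonneg r, mul_self_le_mul_self hR.le hy]
  have hbd : ∀ r ∈ Ioc 0 ε, exp (-l * ε) ≤ r ^ 0 * exp (-l * r) := by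
    intro r hr
    rw [pow_zero, one_mul]
    exact exp_le_exp.mpr (by nlinarith [hr.2])
  have hbox := box_le_moment hDb hDbb hl 0 hAm hAfin hε.le (exp_pos _).le hsub hbd
  have heq : (∫ p in gasRegion Db xh R y, p.2 ^ 0 * exp (-l * p.2))
      = ∫ p in gasRegion Db xh R y, exp (-l * p.2) := by
    apply integral_congr_ae
    filter_upwards with p
    rw [pow_zero, one_mul]
  rw [heq] at hbox
  calc exp (-l * ε) * (W * ε) = exp (-l * ε) * (W * (ε - 0)) := by ring
    _ ≤ _ := hbox

lemma moment_zero_eq (l : ℝ) :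
    (∫ p in gasRegion Db xh R y, p.2 ^ 0 * exp (-l * p.2))
      = ∫ p in gasRegion Db xh R y, exp (-l * p.2) := by
  apply integral_congr_ae; filter_upwards with p; rw [pow_zero, one_mul]

lemma moment_one_eq (l : ℝ) :
    (∫ p in gasRegion Db xh R y, p.2 ^ 1 * exp (-l * p.2))
      = ∫ p in gasRegion Db xh R y, p.2 * exp (-l * p.2) := by
  apply integral_congr_ae; filter_upwards with p; rw [pow_one]

lemma ioi_zero_eq (l c : ℝ) :
    (∫ r in Ioi c, r ^ 0 * exp (-l * r)) = ∫ r in Ioi c, exp (-(l * r)) := by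
  apply integral_congr_ae; filter_upwards with r; rw [pow_zero, one_mul, neg_mul]

lemma ioi_one_eq (l c : ℝ) :
    (∫ r in Ioi c, r ^ 1 * exp (-l * r)) = ∫ r in Ioi c, r * exp (-(l * r)) := by
  apply integral_congr_ae; filter_upwards with r; rw [pow_one, neg_mul]

lemma gasMoment_eq (n : ℕ) (l : ℝ) :
    gasMoment d Db xh R y n l = l * ∫ p in gasRegion Db xh R y, p.2 ^ n * exp (-l * p.2) := by
  unfold gasMoment
  simp_rw [mul_assoc]
  exact integral_const_mul l _

lemma gasMoment_continuousAt (hDb : MeasurableSet Db) (hDbb : Bornology.IsBounded Db)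
    (n : ℕ) {l₀ : ℝ} (hl₀ : 0 < l₀) :
    ContinuousAt (fun l => gasMoment d Db xh R y n l) l₀ := by
  have hSm : MeasurableSet (gasRegion Db xh R y) := measurableSet_gasRegion hDb
  have hcont : ContinuousAt (fun l => ∫ p in gasRegion Db xh R y,
      (fun (l : ℝ) (p : EuclideanSpace ℝ (Fin (d-1)) × ℝ) => l * p.2 ^ n * exp (-l * p.2)) l p) l₀ := by
    refine continuousAt_of_dominated ?_ ?_ ?_ ?_
      (bound := fun p => (2*l₀) * (p.2 ^ n * exp (-(l₀/2) * p.2)))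
    · refine Eventually.of_forall (fun l => Continuous.aestronglyMeasurable ?_)
      fun_prop
    · have hmem : Ioo (l₀/2) (2*l₀) ∈ nhds l₀ := Ioo_mem_nhds (by linarith) (by linarith)
      filter_upwards [hmem] with l hlmem
      filter_upwards [ae_restrict_mem hSm] with p hp
      have hp2 : 0 < p.2 := hp.2.1
      have hlpos : 0 < l := lt_trans (by linarith) hlmem.1
      have h1 : exp (-l * p.2) ≤ exp (-(l₀/2) * p.2) := by
        apply exp_le_exp.mpr; nlinarith [hlmem.1]
      have h2 : (0:ℝ) ≤ p.2 ^ n := pow_nonneg hp2.le n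
      rw [Real.norm_eq_abs, abs_of_nonneg (by positivity)]
      calc l * p.2 ^ n * exp (-l * p.2) ≤ l * p.2 ^ n * exp (-(l₀/2) * p.2) := by
            apply mul_le_mul_of_nonneg_left h1 (by positivity)
        _ ≤ (2*l₀) * p.2 ^ n * exp (-(l₀/2) * p.2) := by
            apply mul_le_mul_of_nonneg_right
              (mul_le_mul_of_nonneg_right (by linarith [hlmem.2]) h2) (exp_pos _).le
        _ = (2*l₀) * (p.2 ^ n * exp (-(l₀/2) * p.2)) := by ring
    · exact (integrableOn_moment hDb hDbb (by positivity : (0:ℝ) < l₀/2) n).const_mul _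
    · refine Eventually.of_forall (fun p => Continuous.continuousAt ?_)
      fun_prop
  exact hcont

/-- `λ ↦ u(λ,y) = h₁(λ,y)/h₀(λ,y)` is strictly decreasing and continuous
on `(0,∞)`, and for every `u > 0` the equation `u = u(λ,y)` has a unique solution
`λ > 0`. -/
theorem archimedes_lambda_unique (d : ℕ) (hd : 2 ≤ d)
    (Db : Set (EuclideanSpace ℝ (Fin (d - 1)))) (hDb : MeasurableSet Db)
    (hDbb : Bornology.IsBounded Db) (hDbpos : 0 < volume Db)
    (R : ℝ) (hR : 0 < R) (xh : EuclideanSpace ℝ (Fin (d - 1)))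
    (hball : Metric.ball xh R ⊆ Db)
    (y : ℝ) (hy : R ≤ y) :
    StrictAntiOn
        (fun l => gasMoment d Db xh R y 1 l / gasMoment d Db xh R y 0 l) (Ioi 0)
      ∧ ContinuousOn
        (fun l => gasMoment d Db xh R y 1 l / gasMoment d Db xh R y 0 l) (Ioi 0)
      ∧ ∀ u : ℝ, 0 < u →
          ∃! l : ℝ, 0 < l ∧ gasMoment d Db xh R y 1 l / gasMoment d Db xh R y 0 l = u := by

  have hVfin : volume Db ≠ ⊤ := hDbb.measure_lt_top.ne
  set V : ℝ := (volume Db).toReal with hV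
  have hVpos : 0 < V := ENNReal.toReal_pos hDbpos.ne' hVfin
  set B : ℝ := y + R with hBdef
  have hB : 0 < B := by simp only [hBdef]; linarith
  have hI0pos : ∀ l : ℝ, 0 < l → 0 < ∫ p in gasRegion Db xh R y, exp (-l * p.2) := by
    intro l hl
    rw [← moment_zero_eq]
    exact moment_pos hDb hDbb hDbpos hR hy hl 0
  have hI1pos : ∀ l : ℝ, 0 < l → 0 < ∫ p in gasRegion Db xh R y, p.2 * exp (-l * p.2) := by
    intro l hl
    rw [← moment_one_eq]
    exact moment_pos hDb hDbb hDbpos hR hy hl 1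
  have hgm0pos : ∀ l : ℝ, 0 < l → 0 < gasMoment d Db xh R y 0 l := by
    intro l hl
    rw [gasMoment_eq, moment_zero_eq]
    exact mul_pos hl (hI0pos l hl)
  have hratio : ∀ l : ℝ, 0 < l → gasMoment d Db xh R y 1 l / gasMoment d Db xh R y 0 l
      = (∫ p in gasRegion Db xh R y, p.2 * exp (-l * p.2))
        / ∫ p in gasRegion Db xh R y, exp (-l * p.2) := by
    intro l hl
    rw [gasMoment_eq, gasMoment_eq, moment_zero_eq, moment_one_eq,
      mul_div_mul_left _ _ hl.ne']
  -- Part 1: strict antitonicity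
  have hanti : StrictAntiOn
      (fun l => gasMoment d Db xh R y 1 l / gasMoment d Db xh R y 0 l) (Ioi 0) := by
    intro a ha b hb hab
    simp only [hratio a (mem_Ioi.mp ha), hratio b (mem_Ioi.mp hb)]
    rw [div_lt_div_iff₀ (hI0pos b (mem_Ioi.mp hb)) (hI0pos a (mem_Ioi.mp ha))]
    exact moments_strict_ineq hDb hDbb hDbpos hR hy (mem_Ioi.mp ha) hab
  -- Part 2: continuity
  have hcont : ContinuousOn
      (fun l => gasMoment d Db xh R y 1 l / gasMoment d Db xh R y 0 l) (Ioi 0) := by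
    intro l hl
    have hl' : 0 < l := mem_Ioi.mp hl
    exact ((gasMoment_continuousAt hDb hDbb 1 hl').div
      (gasMoment_continuousAt hDb hDbb 0 hl') (hgm0pos l hl').ne').continuousWithinAt
  refine ⟨hanti, hcont, ?_⟩
  intro u hu
  -- a point with large value
  have hbig : ∃ a : ℝ, 0 < a ∧
      u < gasMoment d Db xh R y 1 a / gasMoment d Db xh R y 0 a := by
    set l : ℝ := min (1/B) (exp (-2) / (u+1)) with hldef
    have hl : 0 < l := lt_min (by positivity) (by positivity)
    have hlB : l ≤ 1/B := min_le_left _ _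
    have hlu : l * (u+1) ≤ exp (-2) := by
      have := min_le_right (1/B) (exp (-2) / (u+1))
      rw [← hldef] at this
      rw [le_div_iff₀ (by linarith)] at this
      exact this
    have hTB : B ≤ 1/l := by
      rw [le_div_iff₀ hl]
      have h5 : B * l ≤ B * (1/B) := mul_le_mul_of_nonneg_left hlB hB.le
      rwa [mul_one_div_cancel hB.ne'] at h5
    -- lower bound for I1
    have hsub : Db ×ˢ Ioc (1/l) (2*(1/l)) ⊆ gasRegion Db xh R y := by
      refine (Set.prod_mono_right (fun r hr => ?_)).trans (slab_subset_gasRegion hR hy)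
      exact mem_Ioi.mpr (lt_of_le_of_lt hTB hr.1)
    have hbd : ∀ r ∈ Ioc (1/l) (2*(1/l)),
        (1/l) * exp (-2) ≤ r ^ 1 * exp (-l * r) := by
      intro r hr
      rw [pow_one]
      have h1 : exp (-2) ≤ exp (-l * r) := by
        apply exp_le_exp.mpr
        have h2 : l * r ≤ l * (2*(1/l)) := mul_le_mul_of_nonneg_left hr.2 hl.le
        have h3 : l * (2*(1/l)) = 2 := by field_simp
        nlinarith
      have h4 : 0 < (1:ℝ)/l := by positivity
      exact mul_le_mul hr.1.le h1 (exp_pos _).le (by nlinarith [hr.1])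
    have hbox := box_le_moment hDb hDbb hl 1 hDb hVfin
      (by nlinarith [hTB] : 1/l ≤ 2*(1/l)) (by positivity) hsub hbd
    rw [moment_one_eq] at hbox
    have hboxval : (1/l * exp (-2)) * (V * (2*(1/l) - 1/l)) = exp (-2) * V * (1/l) * (1/l) := by
      ring
    rw [hboxval] at hbox
    -- upper bound for I0
    have hSS : gasRegion Db xh R y ∩ {p : EuclideanSpace ℝ (Fin (d-1)) × ℝ | 0 < p.2}
        = gasRegion Db xh R y := inter_eq_left.mpr (fun p hp => hp.2.1)
    have hup := moment_tail_le (xh := xh) (R := R) (y := y) hDb hDbb hl 0 (le_refl 0)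
    rw [hSS, moment_zero_eq, ioi_zero_eq, integral_exp_Ioi hl 0] at hup
    have hupval : V * (exp (-(l * 0)) / l) = V * (1/l) := by norm_num
    rw [hupval] at hup
    refine ⟨l, hl, ?_⟩
    rw [hratio l hl, lt_div_iff₀ (hI0pos l hl)]
    have hle1 : u * (∫ p in gasRegion Db xh R y, exp (-l * p.2)) ≤ u * (V * (1/l)) :=
      mul_le_mul_of_nonneg_left hup hu.le
    have hlt2 : u * (V * (1/l)) < (u+1) * (V * (1/l)) := by
      have : 0 < V * (1/l) := by positivity
      nlinarith
    have hle3 : (u+1) * (V * (1/l)) ≤ (1/l * exp (-2)) * (V * (1/l)) := by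
      refine mul_le_mul_of_nonneg_right ?_ (by positivity)
      rw [div_mul_eq_mul_div, le_div_iff₀ hl, one_mul]
      linarith [hlu]
    have hle4 : (1/l * exp (-2)) * (V * (1/l)) = exp (-2) * V * (1/l) * (1/l) := by ring
    calc u * (∫ p in gasRegion Db xh R y, exp (-l * p.2))
        ≤ u * (V * (1/l)) := hle1
      _ < (u+1) * (V * (1/l)) := hlt2
      _ ≤ (1/l * exp (-2)) * (V * (1/l)) := hle3
      _ = exp (-2) * V * (1/l) * (1/l) := hle4
      _ ≤ _ := hbox
  -- a point with small value
  have hsmall : ∃ b : ℝ, 0 < b ∧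
      gasMoment d Db xh R y 1 b / gasMoment d Db xh R y 0 b < u := by
    obtain ⟨η, W, hη, hW, hbase⟩ := exists_lower_base hd hDb hR hy hball hDbb
    set ε : ℝ := min η (u/4) with hεdef
    have hεpos : 0 < ε := lt_min hη (by positivity)
    have hεη : ε ≤ η := min_le_left _ _
    have hεu : ε ≤ u/4 := min_le_right _ _
    set l : ℝ := Real.sqrt (8*V/(W*ε*u)) + 1 with hldef
    have hl : 0 < l := by positivity
    have hl2 : 8*V/(W*ε*u) ≤ l^2 := by
      have h1 : 0 ≤ 8*V/(W*ε*u) := by positivity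
      nlinarith [Real.sq_sqrt h1, Real.sqrt_nonneg (8*V/(W*ε*u))]
    have hden := hbase ε hεpos hεη l hl
    set S := gasRegion Db xh R y with hSdef
    have hSm : MeasurableSet S := measurableSet_gasRegion hDb
    set tset : Set (EuclideanSpace ℝ (Fin (d-1)) × ℝ) := {p | 2*ε < p.2} with htset
    have htm : MeasurableSet tset := measurableSet_lt measurable_const measurable_snd
    -- tail bound
    have htail := moment_tail_le (xh := xh) (R := R) (y := y) hDb hDbb hl 1
      (by positivity : (0:ℝ) ≤ 2*ε)
    rw [ioi_one_eq] at htail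
    have htail2 := integral_id_exp_Ioi_le hl (by positivity : (0:ℝ) ≤ 2*ε)
    have hexpeq : exp (-(l * (2*ε) / 2)) = exp (-l * ε) := by congr 1; ring
    rw [hexpeq] at htail2
    have htailfull : (∫ p in S ∩ tset, p.2 ^ 1 * exp (-l * p.2))
        ≤ V * (2 / l^2 * exp (-l * ε)) :=
      htail.trans (mul_le_mul_of_nonneg_left htail2 hVpos.le)
    -- splitting
    have hint0 : Integrable (fun p : EuclideanSpace ℝ (Fin (d-1)) × ℝ => exp (-l * p.2))
        (volume.restrict S) := by
      have := integrableOn_moment (xh := xh) (R := R) (y := y) hDb hDbb hl 0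
      simpa [IntegrableOn] using this
    have hint1 : Integrable (fun p : EuclideanSpace ℝ (Fin (d-1)) × ℝ => p.2 * exp (-l * p.2))
        (volume.restrict S) := by
      have := integrableOn_moment (xh := xh) (R := R) (y := y) hDb hDbb hl 1
      simpa [IntegrableOn] using this
    have hsplit : (∫ p in S, p.2 * exp (-l * p.2))
        ≤ 2*ε * (∫ p in S, exp (-l * p.2)) + ∫ p in S ∩ tset, p.2 ^ 1 * exp (-l * p.2) := by
      have hindint : Integrable
          (fun p : EuclideanSpace ℝ (Fin (d-1)) × ℝ =>
            tset.indicator (fun q => q.2 * exp (-l * q.2)) p) (volume.restrict S) :=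
        hint1.indicator htm
      have hmono : (∫ p in S, p.2 * exp (-l * p.2))
          ≤ ∫ p in S, (2*ε * exp (-l * p.2)
              + tset.indicator (fun q => q.2 * exp (-l * q.2)) p) := by
        refine integral_mono_ae hint1 ((hint0.const_mul _).add hindint) ?_
        filter_upwards [ae_restrict_mem hSm] with p hp
        rcases le_or_gt p.2 (2*ε) with hc | hc
        · have hind : tset.indicator (fun q => q.2 * exp (-l * q.2)) p = 0 :=
            indicator_of_notMem (by simpa [htset] using not_lt.mpr hc) _
          rw [hind, add_zero]
          exact mul_le_mul_of_nonneg_right hc (exp_pos _).le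
        · have hind : tset.indicator (fun q => q.2 * exp (-l * q.2)) p
              = p.2 * exp (-l * p.2) := indicator_of_mem (by simpa [htset] using hc) _
          rw [hind]
          nlinarith [exp_pos (-l * p.2), hεpos]
      have hadd : (∫ p in S, (2*ε * exp (-l * p.2)
            + tset.indicator (fun q => q.2 * exp (-l * q.2)) p))
          = 2*ε * (∫ p in S, exp (-l * p.2))
            + ∫ p in S ∩ tset, p.2 ^ 1 * exp (-l * p.2) := by
        rw [integral_add (hint0.const_mul _) hindint, integral_const_mul,
          integral_indicator htm, Measure.restrict_restrict htm]
        congr 1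
        rw [inter_comm]
        apply integral_congr_ae
        filter_upwards with p
        rw [pow_one]
      linarith [hmono, le_of_eq hadd]
    refine ⟨l, hl, ?_⟩
    rw [hratio l hl]
    have hI0l := hI0pos l hl
    rw [div_lt_iff₀ hI0l]
    have htdiv : (∫ p in S ∩ tset, p.2 ^ 1 * exp (-l * p.2))
        ≤ (u/4) * ∫ p in S, exp (-l * p.2) := by
      calc (∫ p in S ∩ tset, p.2 ^ 1 * exp (-l * p.2)) ≤ V * (2 / l^2 * exp (-l * ε)) :=
            htailfull
        _ ≤ (u/4) * (exp (-l * ε) * (W * ε)) := by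
            rw [show V * (2 / l^2 * exp (-l * ε)) = (2*V/l^2) * exp (-l * ε) by ring,
              show (u/4) * (exp (-l * ε) * (W * ε)) = (u/4*(W*ε)) * exp (-l * ε) by ring]
            refine mul_le_mul_of_nonneg_right ?_ (exp_pos _).le
            rw [div_le_iff₀ (by positivity)]
            have hl2' : 8*V ≤ l^2 * (W*ε*u) := by
              rw [div_le_iff₀ (by positivity)] at hl2
              exact hl2
            have hgen : ∀ V' ε' l' : ℝ, 8*V' ≤ l'^2*(W*ε'*u) →
                2*V' ≤ u/4*(W*ε')*l'^2 := by
              intro V' ε' l' h; linarith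
            exact hgen V ε l hl2'
        _ ≤ (u/4) * ∫ p in S, exp (-l * p.2) := by
            refine mul_le_mul_of_nonneg_left hden (by positivity)
    have h2ε : 2*ε ≤ u/2 := by linarith
    have hI0nn : 0 ≤ ∫ p in S, exp (-l * p.2) := hI0l.le
    nlinarith [hsplit, htdiv, hI0l]
  -- combine via IVT
  obtain ⟨a, ha, hfa⟩ := hbig
  obtain ⟨b, hb, hfb⟩ := hsmall
  set f : ℝ → ℝ := fun l => gasMoment d Db xh R y 1 l / gasMoment d Db xh R y 0 l with hf
  have hab : a < b := by
    rcases lt_trichotomy a b with h | h | h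
    · exact h
    · exfalso; rw [h] at hfa; linarith
    · exfalso
      have := hanti (mem_Ioi.mpr hb) (mem_Ioi.mpr ha) h
      simp only [hf] at this
      linarith
  have hIcc : Icc a b ⊆ Ioi 0 := fun x hx => mem_Ioi.mpr (lt_of_lt_of_le ha hx.1)
  have hconts : ContinuousOn f (Icc a b) := hcont.mono hIcc
  have hivt := intermediate_value_Icc' hab.le hconts
  have humem : u ∈ Icc (f b) (f a) := ⟨hfb.le, hfa.le⟩
  obtain ⟨l, hlmem, hfl⟩ := hivt humem
  have hl0 : 0 < l := lt_of_lt_of_le ha hlmem.1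
  refine ⟨l, ⟨hl0, hfl⟩, ?_⟩
  rintro l' ⟨hl'0, hfl'⟩
  refine hanti.injOn (mem_Ioi.mpr hl'0) (mem_Ioi.mpr hl0) ?_
  simp only [hf] at hfl hfl' ⊢
  rw [hfl', hfl]
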